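/- Let U^μ and V^μ be smooth vector fields on ℝ^D, with lowered components U_μ := G_{μν}U^ν and V_μ := G_{μν}V^ν. Then the condition D⁺_ν U_μ = D⁻_μ V_ν for all μ,ν holds if and only if the pair (ζ, b) with ζ^μ := V^μ − U^μ and b_μ := U_μ + V_μ is a Killing pair, i.e. satisfies D⁻_μζ_ν + D⁺_νζ_μ + ∂_μb_ν − ∂_νb_μ = 0 for all μ,ν. -/

import Mathlib

noncomputable section

/-- Partial derivative of `f` at `x` in the `μ`-th coordinate direction. -/
def pd {D : ℕ} (μ : Fin D) (f : (Fin D → ℝ) → ℝ) (x : Fin D → ℝ) : ℝ :=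
  fderiv ℝ f x (Pi.single μ 1)

/-- A smooth real-valued function. -/
def Sm {D : ℕ} (f : (Fin D → ℝ) → ℝ) : Prop := ContDiff ℝ (⊤ : ℕ∞) f

/-- A smooth vector field on `ℝ^D`. -/
def SmoothVF {D : ℕ} (V : (Fin D → ℝ) → Fin D → ℝ) : Prop := ∀ μ, Sm fun x => V x μ

/-- A smooth field of 2-tensors on `ℝ^D`. -/
def Smooth2T {D : ℕ} (T : (Fin D → ℝ) → Fin D → Fin D → ℝ) : Prop :=
  ∀ μ ν, Sm fun x => T x μ ν

/-- The connection coefficients `Γ_{μν,ρ} = ½(∂_μG_{νρ} + ∂_νG_{μρ} − ∂_ρG_{μν})`. -/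
def Gam {D : ℕ} (G : (Fin D → ℝ) → Fin D → Fin D → ℝ) (μ ν ρ : Fin D) (x : Fin D → ℝ) : ℝ :=
  (pd μ (fun y => G y ν ρ) x + pd ν (fun y => G y μ ρ) x - pd ρ (fun y => G y μ ν) x) / 2

/-- The torsion `H_{μνρ} = ∂_μB_{νρ} + ∂_νB_{ρμ} + ∂_ρB_{μν}`. -/
def Htor {D : ℕ} (B : (Fin D → ℝ) → Fin D → Fin D → ℝ) (μ ν ρ : Fin D) (x : Fin D → ℝ) : ℝ :=
  pd μ (fun y => B y ν ρ) x + pd ν (fun y => B y ρ μ) x + pd ρ (fun y => B y μ ν) x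

/-- `Γ⁺_{μν,ρ} = Γ_{μν,ρ} + ½H_{μνρ}`. -/
def GamP {D : ℕ} (G B : (Fin D → ℝ) → Fin D → Fin D → ℝ) (μ ν ρ : Fin D) (x : Fin D → ℝ) : ℝ :=
  Gam G μ ν ρ x + Htor B μ ν ρ x / 2

/-- `Γ⁻_{μν,ρ} = Γ_{μν,ρ} − ½H_{μνρ}`. -/
def GamM {D : ℕ} (G B : (Fin D → ℝ) → Fin D → Fin D → ℝ) (μ ν ρ : Fin D) (x : Fin D → ℝ) : ℝ :=
  Gam G μ ν ρ x - Htor B μ ν ρ x / 2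

/-- The lowered components `V_μ = G_{μν}V^ν` of a vector field. -/
def lowerV {D : ℕ} (G : (Fin D → ℝ) → Fin D → Fin D → ℝ)
    (V : (Fin D → ℝ) → Fin D → ℝ) (μ : Fin D) (x : Fin D → ℝ) : ℝ :=
  ∑ ν, G x μ ν * V x ν

/-- The covariant derivative `D⁺_μV_ν = G_{νρ}∂_μV^ρ + Γ⁺_{μρ,ν}V^ρ`. -/
def Dp {D : ℕ} (G B : (Fin D → ℝ) → Fin D → Fin D → ℝ)
    (V : (Fin D → ℝ) → Fin D → ℝ) (μ ν : Fin D) (x : Fin D → ℝ) : ℝ :=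
  (∑ ρ, G x ν ρ * pd μ (fun y => V y ρ) x) + ∑ ρ, GamP G B μ ρ ν x * V x ρ

/-- The covariant derivative `D⁻_μV_ν = G_{νρ}∂_μV^ρ + Γ⁻_{μρ,ν}V^ρ`. -/
def Dm {D : ℕ} (G B : (Fin D → ℝ) → Fin D → Fin D → ℝ)
    (V : (Fin D → ℝ) → Fin D → ℝ) (μ ν : Fin D) (x : Fin D → ℝ) : ℝ :=
  (∑ ρ, G x ν ρ * pd μ (fun y => V y ρ) x) + ∑ ρ, GamM G B μ ρ ν x * V x ρ

/-- The Lie derivative of the metric: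
`(ℒ_ζG)_{μν} = ζ^ρ∂_ρG_{μν} + ∂_μζ^ρ·G_{ρν} + ∂_νζ^ρ·G_{μρ}`. -/
def lieG {D : ℕ} (G : (Fin D → ℝ) → Fin D → Fin D → ℝ)
    (ζ : (Fin D → ℝ) → Fin D → ℝ) (μ ν : Fin D) (x : Fin D → ℝ) : ℝ :=
  (∑ ρ, ζ x ρ * pd ρ (fun y => G y μ ν) x)
    + (∑ ρ, pd μ (fun y => ζ y ρ) x * G x ρ ν)
    + ∑ ρ, pd ν (fun y => ζ y ρ) x * G x μ ρ

/-- A Killing pair `(ζ, b)`: `D⁻_μζ_ν + D⁺_νζ_μ + ∂_μb_ν − ∂_νb_μ = 0`. -/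
def IsKillingPair {D : ℕ} (G B : (Fin D → ℝ) → Fin D → Fin D → ℝ)
    (ζ b : (Fin D → ℝ) → Fin D → ℝ) : Prop :=
  ∀ (μ ν : Fin D) (x : Fin D → ℝ),
    Dm G B ζ μ ν x + Dp G B ζ ν μ x
      + pd μ (fun y => b y ν) x - pd ν (fun y => b y μ) x = 0

lemma pd_add' {D : ℕ} {f g : (Fin D → ℝ) → ℝ} {x : Fin D → ℝ} (μ : Fin D)
    (hf : DifferentiableAt ℝ f x) (hg : DifferentiableAt ℝ g x) :
    pd μ (fun y => f y + g y) x = pd μ f x + pd μ g x := by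
  simp [pd, fderiv_fun_add hf hg]

lemma pd_sub' {D : ℕ} {f g : (Fin D → ℝ) → ℝ} {x : Fin D → ℝ} (μ : Fin D)
    (hf : DifferentiableAt ℝ f x) (hg : DifferentiableAt ℝ g x) :
    pd μ (fun y => f y - g y) x = pd μ f x - pd μ g x := by
  simp [pd, fderiv_fun_sub hf hg]

lemma pd_mul' {D : ℕ} {f g : (Fin D → ℝ) → ℝ} {x : Fin D → ℝ} (μ : Fin D)
    (hf : DifferentiableAt ℝ f x) (hg : DifferentiableAt ℝ g x) :
    pd μ (fun y => f y * g y) x = f x * pd μ g x + g x * pd μ f x := by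
  simp [pd, fderiv_fun_mul hf hg]

lemma pd_neg' {D : ℕ} {f : (Fin D → ℝ) → ℝ} {x : Fin D → ℝ} (μ : Fin D) :
    pd μ (fun y => -f y) x = - pd μ f x := by
  simp [pd, fderiv_neg]

lemma pd_sum' {D : ℕ} {ι : Type*} (s : Finset ι) {f : ι → (Fin D → ℝ) → ℝ} {x : Fin D → ℝ}
    (μ : Fin D) (hf : ∀ i ∈ s, DifferentiableAt ℝ (f i) x) :
    pd μ (fun y => ∑ i ∈ s, f i y) x = ∑ i ∈ s, pd μ (f i) x := by
  simp [pd, fderiv_fun_sum hf]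

/-- `D⁺_νU_μ = D⁻_μV_ν` for all `μ,ν` iff `(V − U, U_lowered + V_lowered)` is a Killing pair. -/
theorem stmt18 {D : ℕ} (hD : 1 ≤ D)
    (G B : (Fin D → ℝ) → Fin D → Fin D → ℝ)
    (hGs : Smooth2T G) (hGsym : ∀ x μ ν, G x μ ν = G x ν μ)
    (hBs : Smooth2T B) (hBanti : ∀ x μ ν, B x μ ν = -B x ν μ)
    (U V : (Fin D → ℝ) → Fin D → ℝ) (hU : SmoothVF U) (hV : SmoothVF V) :
    (∀ μ ν x, Dp G B U ν μ x = Dm G B V μ ν x) ↔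
      IsKillingPair G B (fun x μ => V x μ - U x μ)
        (fun x μ => lowerV G U μ x + lowerV G V μ x) := by
  have dG : ∀ (a b : Fin D) (x : Fin D → ℝ), DifferentiableAt ℝ (fun y => G y a b) x :=
    fun a b x => ((hGs a b).differentiable (by simp)).differentiableAt
  have dU : ∀ (a : Fin D) (x : Fin D → ℝ), DifferentiableAt ℝ (fun y => U y a) x :=
    fun a x => ((hU a).differentiable (by simp)).differentiableAt
  have dV : ∀ (a : Fin D) (x : Fin D → ℝ), DifferentiableAt ℝ (fun y => V y a) x :=
    fun a x => ((hV a).differentiable (by simp)).differentiableAt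
  have hGsd : ∀ (σ a b : Fin D) (x : Fin D → ℝ),
      pd σ (fun y => G y a b) x = pd σ (fun y => G y b a) x := by
    intro σ a b x
    have h : (fun y => G y a b) = fun y => G y b a := funext fun y => hGsym y a b
    rw [h]
  have hBsd : ∀ (σ a b : Fin D) (x : Fin D → ℝ),
      pd σ (fun y => B y a b) x = - pd σ (fun y => B y b a) x := by
    intro σ a b x
    have h : (fun y => B y a b) = fun y => -(B y b a) := funext fun y => hBanti y a b
    rw [h, pd_neg']
  have hpdb : ∀ (σ a : Fin D) (x : Fin D → ℝ) (W : (Fin D → ℝ) → Fin D → ℝ),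
      (∀ (c : Fin D) (x : Fin D → ℝ), DifferentiableAt ℝ (fun y => W y c) x) →
      pd σ (fun y => lowerV G W a y) x
        = ∑ ρ, (pd σ (fun y => G y a ρ) x * W x ρ + G x a ρ * pd σ (fun y => W y ρ) x) := by
    intro σ a x W dW
    simp only [lowerV]
    rw [pd_sum' Finset.univ σ (fun ρ _ => (dG a ρ x).fun_mul (dW ρ x))]
    exact Finset.sum_congr rfl fun ρ _ => by
      rw [pd_mul' σ (dG a ρ x) (dW ρ x)]; ring
  have key : ∀ (μ ν : Fin D) (x : Fin D → ℝ),
      Dm G B (fun x μ => V x μ - U x μ) μ ν x + Dp G B (fun x μ => V x μ - U x μ) ν μ x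
        + pd μ (fun y => lowerV G U ν y + lowerV G V ν y) x
        - pd ν (fun y => lowerV G U μ y + lowerV G V μ y) x
      = 2 * (Dm G B V μ ν x - Dp G B U ν μ x) := by
    intro μ ν x
    have hpdζ : ∀ (σ ρ : Fin D), pd σ (fun y => V y ρ - U y ρ) x
        = pd σ (fun y => V y ρ) x - pd σ (fun y => U y ρ) x :=
      fun σ ρ => pd_sub' σ (dV ρ x) (dU ρ x)
    have dLow : ∀ (a : Fin D) (x : Fin D → ℝ) (W : (Fin D → ℝ) → Fin D → ℝ),
        (∀ (c : Fin D) (x : Fin D → ℝ), DifferentiableAt ℝ (fun y => W y c) x) →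
        DifferentiableAt ℝ (fun y => lowerV G W a y) x := by
      intro a x W dW
      simp only [lowerV]
      exact DifferentiableAt.fun_sum fun ρ _ => (dG a ρ x).fun_mul (dW ρ x)
    rw [pd_add' μ (dLow ν x U dU) (dLow ν x V dV),
        pd_add' ν (dLow μ x U dU) (dLow μ x V dV),
        hpdb μ ν x U dU, hpdb μ ν x V dV, hpdb ν μ x U dU, hpdb ν μ x V dV]
    simp only [Dm, Dp, GamM, GamP, Gam, Htor, hpdζ]
    simp only [Finset.mul_sum, ← Finset.sum_add_distrib, ← Finset.sum_sub_distrib]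
    refine Finset.sum_congr rfl fun ρ _ => ?_
    linear_combination ((U x ρ + V x ρ)/2) *
      (hGsd ν ρ μ x + hGsd ρ ν μ x - hGsd μ ρ ν x
        + hBsd ν ρ μ x + hBsd ρ μ ν x + hBsd μ ν ρ x)
  constructor
  · intro h μ ν x
    simp only []
    rw [key μ ν x, h μ ν x]
    ring
  · intro h μ ν x
    have hk := h μ ν x
    simp only [] at hk
    rw [key μ ν x] at hk
    linarith
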